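/- Symbol of the sub-Laplacian: for every Schwartz function h : ℝ → ℂ, every λ ∈ ℝ \ {0}, μ ∈ ℝ, and u ∈ ℝ, the functions t ↦ (π_{λ,μ}(t,0,0,0)h)(u) and t ↦ (π_{λ,μ}(0,t,0,0)h)(u) are twice differentiable at t = 0, and d²/dt²|_{t=0} (π_{λ,μ}(t,0,0,0)h)(u) + d²/dt²|_{t=0} (π_{λ,μ}(0,t,0,0)h)(u) = h''(u) − ¼(λu² − μ/λ)² h(u). -/

import Mathlib

open Complex

noncomputable section

/-- The action of the representation `π_{λ,μ}(x)` on a function `h : ℝ → ℂ`: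
`(π_{λ,μ}(x)h)(u) = exp(i(−(μ/(2λ))x₂ + λx₄ − λx₃u + (λ/2)x₂u²)) · h(u + x₁)`. -/
def piAct (lam mu : ℝ) (x : ℝ × ℝ × ℝ × ℝ) (h : ℝ → ℂ) (u : ℝ) : ℂ :=
  Complex.exp (Complex.I *
    ((-(mu / (2 * lam)) * x.2.1 + lam * x.2.2.2 - lam * x.2.2.1 * u
      + (lam / 2) * x.2.1 * u ^ 2 : ℝ) : ℂ)) * h (u + x.1)

/-- Symbol of the sub-Laplacian `ℒ = X₁² + X₂²`: for Schwartz `h`, `λ ≠ 0`, `μ`, `u`, the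
curves `g₁ : t ↦ (π_{λ,μ}(t,0,0,0)h)(u)` and `g₂ : t ↦ (π_{λ,μ}(0,t,0,0)h)(u)` are twice
differentiable at `t = 0` and
`g₁''(0) + g₂''(0) = h''(u) − ¼(λu² − μ/λ)² h(u)`. -/
theorem engel_sublaplacian_symbol :
    ∀ h : SchwartzMap ℝ ℂ, ∀ lam : ℝ, lam ≠ 0 → ∀ mu u : ℝ,
      (∀ t : ℝ, DifferentiableAt ℝ (fun s : ℝ => piAct lam mu (s, 0, 0, 0) h u) t) ∧
      (∀ t : ℝ, DifferentiableAt ℝ (fun s : ℝ => piAct lam mu (0, s, 0, 0) h u) t) ∧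
      ∃ c₁ c₂ : ℂ,
        HasDerivAt (deriv (fun s : ℝ => piAct lam mu (s, 0, 0, 0) h u)) c₁ 0 ∧
        HasDerivAt (deriv (fun s : ℝ => piAct lam mu (0, s, 0, 0) h u)) c₂ 0 ∧
        c₁ + c₂ = deriv (deriv (h : ℝ → ℂ)) u
          - (1 / 4 : ℂ) * ((lam * u ^ 2 - mu / lam : ℝ) : ℂ) ^ 2 * h u := by
  intro h lam hlam mu u
  have hd : ContDiff ℝ (⊤ : ℕ∞) (h : ℝ → ℂ) := h.smooth ⊤
  have hd' : ContDiff ℝ (⊤ : ℕ∞) (deriv (h : ℝ → ℂ)) := (contDiff_infty_iff_deriv.mp hd).2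
  set a : ℝ := -(mu / (2 * lam)) + (lam / 2) * u ^ 2 with ha
  set b : ℂ := Complex.I * a with hb
  have hg1 : (fun s : ℝ => piAct lam mu (s, 0, 0, 0) h u) = fun s => (h : ℝ → ℂ) (u + s) := by
    funext s; simp [piAct]
  have hg2 : (fun s : ℝ => piAct lam mu (0, s, 0, 0) h u)
      = fun s : ℝ => Complex.exp (b * s) * (h : ℝ → ℂ) u := by
    funext s
    have harg : Complex.I * ((-(mu / (2 * lam)) * s + lam * 0 - lam * 0 * u
        + (lam / 2) * s * u ^ 2 : ℝ) : ℂ) = b * s := by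
      rw [hb, ha]; push_cast; ring
    simp only [piAct, add_zero]
    rw [harg]
  -- derivatives of g₁
  have key1 : ∀ t : ℝ, HasDerivAt (fun s : ℝ => (h : ℝ → ℂ) (u + s)) (deriv (h : ℝ → ℂ) (u + t)) t := by
    intro t
    have h1 : HasDerivAt (h : ℝ → ℂ) (deriv (h : ℝ → ℂ) (u + t)) (u + t) :=
      h.differentiableAt.hasDerivAt
    have h2 : HasDerivAt (fun s : ℝ => u + s) 1 t := (hasDerivAt_id t).const_add u
    have := h1.scomp t h2; simp only [one_smul] at this; exact this
  have hderiv1 : deriv (fun s : ℝ => piAct lam mu (s, 0, 0, 0) h u)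
      = fun t : ℝ => deriv (h : ℝ → ℂ) (u + t) := by
    rw [hg1]; funext t; exact (key1 t).deriv
  -- derivatives of g₂
  have key2 : ∀ t : ℝ, HasDerivAt (fun s : ℝ => Complex.exp (b * s)) (b * Complex.exp (b * t)) t := by
    intro t
    have h1 : HasDerivAt (fun s : ℝ => ((s : ℂ))) 1 t := Complex.ofRealCLM.hasDerivAt
    have h2 : HasDerivAt (fun s : ℝ => b * (s : ℂ)) b t := by simpa using h1.const_mul b
    simpa [mul_comm] using h2.cexp
  have hderiv2 : deriv (fun s : ℝ => piAct lam mu (0, s, 0, 0) h u)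
      = fun t : ℝ => b * Complex.exp (b * t) * (h : ℝ → ℂ) u := by
    rw [hg2]; funext t; exact ((key2 t).mul_const _).deriv
  refine ⟨?_, ?_, deriv (deriv (h : ℝ → ℂ)) u, b ^ 2 * (h : ℝ → ℂ) u, ?_, ?_, ?_⟩
  · intro t; rw [hg1]; exact (key1 t).differentiableAt
  · intro t; rw [hg2]; exact ((key2 t).mul_const _).differentiableAt
  · rw [hderiv1]
    have h1 : HasDerivAt (deriv (h : ℝ → ℂ)) (deriv (deriv (h : ℝ → ℂ)) (u + 0)) (u + 0) :=
      (hd'.differentiable (by simp) (u + 0)).hasDerivAt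
    have h2 : HasDerivAt (fun s : ℝ => u + s) 1 (0 : ℝ) := (hasDerivAt_id 0).const_add u
    have := h1.scomp 0 h2; simp only [one_smul, add_zero] at this; exact this
  · rw [hderiv2]
    have := ((key2 0).const_mul b).mul_const ((h : ℝ → ℂ) u)
    simpa [sq, mul_assoc] using this
  · have hlc : (lam : ℂ) ≠ 0 := by exact_mod_cast hlam
    have hb2 : b ^ 2 = -((a : ℂ)) ^ 2 := by
      rw [hb, mul_pow, Complex.I_sq]; ring
    rw [hb2, ha]
    push_cast
    field_simp
    ring
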